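/- arXiv:2208.03844 — 2 statements merged into one kernel-verified Lean document; each statement's English description precedes it below -/
import Mathlib

section
/- Let T be the type of unlabeled binary trees and < the hereditary lexicographic order (generated by 0 < ⟨a,b⟩; a < c → ⟨a,b⟩ < ⟨c,d⟩; b < d → ⟨a,b⟩ < ⟨a,d⟩). Restricted to Cantor normal forms, the relation < is well-founded. -/
/-- Unlabelled binary trees. -/
inductive T : Type
  | zero : T
  | node : T → T → T

/-- The hereditary lexicographical order on binary trees. -/
inductive tlt : T → T → Prop
  | z {a b : T} : tlt T.zero (T.node a b)
  | l {a b c d : T} : tlt a c → tlt (T.node a b) (T.node c d)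
  | r {a b d : T} : tlt b d → tlt (T.node a b) (T.node a d)

/-- The reflexive closure of `tlt`. -/
def tle (s t : T) : Prop := tlt s t ∨ s = t

/-- The left subtree, if it exists. -/
def left : T → T
  | T.zero => T.zero
  | T.node a _ => a

/-- The Cantor normal form predicate. -/
inductive isCNF : T → Prop
  | z : isCNF T.zero
  | n {s t : T} : isCNF s → isCNF t → tle (left t) s → isCNF (T.node s t)

/-- Ordinal value of a tree. -/
noncomputable def eval : T → Ordinal.{0}
  | T.zero => 0
  | T.node a b => Ordinal.omega0 ^ eval a + eval b

/-- Size of a tree. -/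
def tsize : T → ℕ
  | T.zero => 0
  | T.node a b => tsize a + tsize b + 1

lemma key : ∀ n : ℕ, ∀ s, tsize s ≤ n → isCNF s →
    eval s < Ordinal.omega0 ^ (eval (left s) + 1) ∧
    ∀ t, isCNF t → tlt s t → eval s < eval t := by
  intro n
  induction n using Nat.strong_induction_on with
  | _ n ih =>
    intro s hs hcnf
    match s, hcnf with
    | T.zero, _ =>
      constructor
      · simp only [eval, left]
        exact Ordinal.opow_pos _ Ordinal.omega0_pos
      · intro t ht hlt
        cases hlt with
        | z =>
          calc (0 : Ordinal) < Ordinal.omega0 ^ eval _ :=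
                Ordinal.opow_pos _ Ordinal.omega0_pos
            _ ≤ _ := le_self_add
    | T.node a b, isCNF.n ha hb hle =>
      have hsa : tsize a < n := by
        have : tsize a < tsize (T.node a b) := by simp [tsize]
        omega
      have hsb : tsize b < n := by
        have : tsize b < tsize (T.node a b) := by simp [tsize]
        omega
      have hslb : tsize (left b) ≤ tsize b := by
        cases b <;> simp [left, tsize] <;> omega
      -- eval (left b) ≤ eval a
      have hcnflb : isCNF (left b) := by
        cases hb with
        | z => exact isCNF.z
        | n h1 _ _ => exact h1
      have hlba : eval (left b) ≤ eval a := by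
        rcases hle with h | h
        · exact le_of_lt (((ih (tsize (left b))
            (lt_of_le_of_lt hslb hsb) (left b) le_rfl hcnflb).2) a ha h)
        · rw [h]
      -- the bound
      have hbbound : eval b < Ordinal.omega0 ^ (eval (left b) + 1) :=
        (ih (tsize b) hsb b le_rfl hb).1
      have hbound : eval (T.node a b) < Ordinal.omega0 ^ (eval a + 1) := by
        have h1 : eval b < Ordinal.omega0 ^ (eval a + 1) :=
          lt_of_lt_of_le hbbound
            (Ordinal.opow_le_opow_right Ordinal.omega0_pos (add_le_add_left hlba 1))
        have h2 : Ordinal.omega0 ^ eval a < Ordinal.omega0 ^ (eval a + 1) :=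
          (Ordinal.opow_lt_opow_iff_right Ordinal.one_lt_omega0).2 (lt_add_one _)
        exact Ordinal.principal_add_omega0_opow _ h2 h1
      refine ⟨by simpa [left] using hbound, ?_⟩
      intro t ht hlt
      cases hlt with
      | l hac =>
        rename_i c d
        cases ht with
        | n hc hd _ =>
          have hac' : eval a < eval c :=
            (ih (tsize a) hsa a le_rfl ha).2 c hc hac
          calc eval (T.node a b) < Ordinal.omega0 ^ (eval a + 1) := hbound
            _ ≤ Ordinal.omega0 ^ eval c :=
                Ordinal.opow_le_opow_right Ordinal.omega0_pos (Order.add_one_le_of_lt hac')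
            _ ≤ Ordinal.omega0 ^ eval c + eval d := le_self_add
            _ = eval (T.node c d) := rfl
      | r hbd =>
        rename_i d
        cases ht with
        | n _ hd _ =>
          have : eval b < eval d := (ih (tsize b) hsb b le_rfl hb).2 d hd hbd
          show Ordinal.omega0 ^ eval a + eval b < Ordinal.omega0 ^ eval a + eval d
          exact add_lt_add_right this _

lemma eval_strict_mono {s t : T} (hs : isCNF s) (ht : isCNF t) (h : tlt s t) :
    eval s < eval t :=
  (key (tsize s) s le_rfl hs).2 t ht h

/-- The hereditary lexicographic order is well-founded on Cantor normal forms. -/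
theorem tlt_wellFounded_on_cnf :
    WellFounded (fun a b : {t : T // isCNF t} => tlt a.1 b.1) := by
  have h : Subrelation (fun a b : {t : T // isCNF t} => tlt a.1 b.1)
      (InvImage (· < ·) (fun a : {t : T // isCNF t} => eval a.1)) := by
    intro a b hab
    exact eval_strict_mono a.2 b.2 hab
  exact Subrelation.wf h (InvImage.wf _ (Ordinal.lt_wf))
end

section
/- Cantor normal forms have left subtraction: for all CNFs a, b with a ≤ b, there exists a CNF c such that a + c = b. -/
open Classical in
/-- Addition of Cantor normal forms. -/
noncomputable def tadd : T → T → T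
  | T.zero, b => b
  | a, T.zero => a
  | T.node a c, T.node b d =>
      if tlt a b then T.node b d else T.node a (tadd c (T.node b d))

lemma tlt_irrefl : ∀ a : T, ¬ tlt a a := by
  intro a
  induction a with
  | zero => intro h; cases h
  | node l r ihl ihr =>
    intro h
    cases h with
    | l h => exact ihl h
    | r h => exact ihr h

lemma tlt_trans : ∀ a b c : T, tlt a b → tlt b c → tlt a c := by
  intro a
  induction a with
  | zero =>
    intro b c hab hbc
    cases hbc <;> exact tlt.z
  | node a₁ a₂ ih₁ ih₂ =>
    intro b c hab hbc
    cases hab with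
    | l h =>
      cases hbc with
      | l h' => exact tlt.l (ih₁ _ _ h h')
      | r h' => exact tlt.l h
    | r h =>
      cases hbc with
      | l h' => exact tlt.l h'
      | r h' => exact tlt.r (ih₂ _ _ h h')

lemma tlt_total : ∀ a b : T, tlt a b ∨ a = b ∨ tlt b a := by
  intro a
  induction a with
  | zero =>
    intro b
    cases b with
    | zero => exact Or.inr (Or.inl rfl)
    | node l r => exact Or.inl tlt.z
  | node a₁ a₂ ih₁ ih₂ =>
    intro b
    cases b with
    | zero => exact Or.inr (Or.inr tlt.z)
    | node b₁ b₂ =>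
      rcases ih₁ b₁ with h | h | h
      · exact Or.inl (tlt.l h)
      · subst h
        rcases ih₂ b₂ with h | h | h
        · exact Or.inl (tlt.r h)
        · subst h; exact Or.inr (Or.inl rfl)
        · exact Or.inr (Or.inr (tlt.r h))
      · exact Or.inr (Or.inr (tlt.l h))

lemma tadd_zero : ∀ a : T, tadd a T.zero = a := by
  intro a
  cases a <;> rfl

lemma tle_trans {a b c : T} (h₁ : tle a b) (h₂ : tle b c) : tle a c := by
  rcases h₁ with h₁ | rfl
  · rcases h₂ with h₂ | rfl
    · exact Or.inl (tlt_trans _ _ _ h₁ h₂)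
    · exact Or.inl h₁
  · exact h₂

/-- The left of a sum with nonzero second argument dominates the left of that argument. -/
lemma left_tadd (x c₁ c₂ : T) : tle c₁ (left (tadd x (T.node c₁ c₂))) := by
  cases x with
  | zero => exact Or.inr rfl
  | node x₁ x₂ =>
    rw [tadd]
    by_cases h : tlt x₁ c₁
    · rw [if_pos h]; exact Or.inr rfl
    · rw [if_neg h]
      rcases tlt_total c₁ x₁ with h' | h' | h'
      · exact Or.inl h'
      · exact Or.inr h'
      · exact absurd h' h

/-- CNFs have left subtraction: if `a ≤ b` there is a CNF `c` with `a + c = b`. -/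
theorem cnf_subtraction :
    ∀ a b : T, isCNF a → isCNF b → tle a b →
      ∃ c : T, isCNF c ∧ tadd a c = b := by
  intro a
  induction a with
  | zero =>
    intro b _ hb _
    exact ⟨b, hb, by cases b <;> rfl⟩
  | node a₁ a₂ ih₁ ih₂ =>
    intro b ha hb hle
    rcases hle with hlt | rfl
    case inr => exact ⟨T.zero, isCNF.z, tadd_zero _⟩
    cases hlt with
    | l h =>
      rename_i b₁ b₂
      refine ⟨T.node b₁ b₂, hb, ?_⟩
      rw [tadd, if_pos h]
    | r h =>
      rename_i b₂
      -- b = node a₁ b₂, tlt a₂ b₂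
      have ha₂ : isCNF a₂ := by cases ha; assumption
      have hb₂ : isCNF b₂ := by cases hb; assumption
      have hbl : tle (left b₂) a₁ := by cases hb; assumption
      obtain ⟨c, hc, hadd⟩ := ih₂ b₂ ha₂ hb₂ (Or.inl h)
      cases c with
      | zero =>
        rw [tadd_zero] at hadd
        subst hadd
        exact ⟨T.zero, isCNF.z, tadd_zero _⟩
      | node c₁ c₂ =>
        refine ⟨T.node c₁ c₂, hc, ?_⟩
        have hc₁ : tle c₁ a₁ := by
          have := left_tadd a₂ c₁ c₂
          rw [hadd] at this
          exact tle_trans this hbl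
        have hn : ¬ tlt a₁ c₁ := by
          rcases hc₁ with h' | rfl
          · intro hh; exact tlt_irrefl a₁ (tlt_trans _ _ _ hh h')
          · exact tlt_irrefl c₁
        rw [tadd, if_neg hn, hadd]
end
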